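/- Let F be a finite field of odd cardinality q with quadratic character χ. For any m ∈ F and nonzero u ∈ F with v = -m·u, the shift (u, v) achieves autocorrelation value exactly 1 - q for S_m; hence the bound q - 1 on the magnitude of off-peak autocorrelation of S_m is attained. -/

import Mathlib

lemma qc_shift_sum (F : Type*) [Field F] [Fintype F] [DecidableEq F]
    (hF : ringChar F ≠ 2) (u : F) (hu : u ≠ 0) :
    ∑ x : F, (quadraticChar F x : ℤ) * quadraticChar F (x + u) = -1 := by
  set χ := quadraticChar F
  have hbij : Function.Bijective (fun x : F => 1 + u * x⁻¹) := by
    apply Function.bijective_iff_has_inverse.2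
    refine ⟨fun t => u * (t - 1)⁻¹, fun x => ?_, fun t => ?_⟩
    · by_cases hx : x = 0
      · simp [hx]
      · field_simp
        rw [add_sub_cancel_left, div_self hu]
    · by_cases ht : t = 1
      · simp [ht]
      · have : t - 1 ≠ 0 := sub_ne_zero.mpr ht
        field_simp
        ring
  have hpt : ∀ x : F, (χ x : ℤ) * χ (x + u)
      = χ (1 + u * x⁻¹) - (if x = 0 then 1 else 0) := by
    intro x
    by_cases hx : x = 0
    · simp [hx, χ]
    · have h1 : x * (x + u) = x ^ 2 * (1 + u * x⁻¹) := by field_simp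
      have : (χ x : ℤ) * χ (x + u) = χ (x * (x + u)) := (map_mul χ x (x + u)).symm
      rw [this, h1, map_mul, quadraticChar_sq_one' hx]
      simp [hx]
  calc ∑ x : F, (χ x : ℤ) * χ (x + u)
      = ∑ x : F, ((χ (1 + u * x⁻¹) : ℤ) - (if x = 0 then 1 else 0)) := by
        exact Finset.sum_congr rfl fun x _ => hpt x
    _ = (∑ x : F, (χ (1 + u * x⁻¹) : ℤ)) - ∑ x : F, (if x = 0 then (1:ℤ) else 0) := by
        rw [Finset.sum_sub_distrib]
    _ = (∑ t : F, (χ t : ℤ)) - 1 := by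
        rw [Fintype.sum_bijective _ hbij _ (fun t => (χ t : ℤ)) (fun x => rfl)]
        simp
    _ = -1 := by rw [quadraticChar_sum_zero hF]; ring

lemma qc_sq_sum (F : Type*) [Field F] [Fintype F] [DecidableEq F] (c : F) :
    ∑ y : F, ((quadraticChar F (c + y) : ℤ) * quadraticChar F (c + y))
      = (Fintype.card F : ℤ) - 1 := by
  set χ := quadraticChar F
  have hbij : Function.Bijective (fun y : F => c + y) := (Equiv.addLeft c).bijective
  rw [Fintype.sum_bijective _ hbij _ (fun t => (χ t : ℤ) * χ t) (fun x => rfl)]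
  have : ∀ t : F, (χ t : ℤ) * χ t = 1 - (if t = 0 then 1 else 0) := by
    intro t
    by_cases ht : t = 0
    · simp [ht, χ]
    · have := quadraticChar_sq_one ht
      rw [pow_two] at this
      rw [if_neg ht, sub_zero]; exact this
  rw [Finset.sum_congr rfl fun t _ => this t, Finset.sum_sub_distrib]
  simp

theorem autocorrelation_bound_attained
    (F : Type*) [Field F] [Fintype F] [DecidableEq F]
    (hodd : Odd (Fintype.card F))
    (χ : F → ℤ) (hχ : ∀ x, χ x = quadraticChar F x)
    (S : F → F × F → ℤ) (hS : ∀ m x y, S m (x, y) = χ x * χ (m * x + y))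
    (m u : F) (hu : u ≠ 0) :
    ∑ x : F, ∑ y : F, S m (x, y) * S m (x + u, y + (-(m * u))) = 1 - (Fintype.card F : ℤ) ∧
    |∑ x : F, ∑ y : F, S m (x, y) * S m (x + u, y + (-(m * u)))| = (Fintype.card F : ℤ) - 1 := by
  have hF : ringChar F ≠ 2 := by
    intro h
    have := FiniteField.even_card_of_char_two h
    rcases hodd with ⟨k, hk⟩
    omega
  have hq : 2 ≤ (Fintype.card F : ℤ) := by
    have := Fintype.one_lt_card_iff_nontrivial.mpr (inferInstance : Nontrivial F)
    exact_mod_cast this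
  have hmain : ∑ x : F, ∑ y : F, S m (x, y) * S m (x + u, y + (-(m * u)))
      = 1 - (Fintype.card F : ℤ) := by
    have hsum : ∀ x : F, ∑ y : F, S m (x, y) * S m (x + u, y + (-(m * u)))
        = (quadraticChar F x : ℤ) * quadraticChar F (x + u) * ((Fintype.card F : ℤ) - 1) := by
      intro x
      have : ∀ y : F, S m (x, y) * S m (x + u, y + (-(m * u)))
          = (quadraticChar F x : ℤ) * quadraticChar F (x + u)
            * ((quadraticChar F (m * x + y) : ℤ) * quadraticChar F (m * x + y)) := by
        intro y
        rw [hS, hS, hχ, hχ, hχ, hχ]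
        have harg : m * (x + u) + (y + -(m * u)) = m * x + y := by ring
        rw [harg]; ring
      rw [Finset.sum_congr rfl fun y _ => this y, ← Finset.mul_sum, qc_sq_sum F (m * x)]
    rw [Finset.sum_congr rfl fun x _ => hsum x, ← Finset.sum_mul, qc_shift_sum F hF u hu]
    ring
  refine ⟨hmain, ?_⟩
  rw [hmain, abs_sub_comm, abs_of_nonneg (by linarith)]
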